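/- For every K ≥ 2 there is a constant C such that every K-majority tournament has a dominating set of size at most C·K·log K. -/

import Mathlib

set_option maxHeartbeats 1000000


open Finset

/-- Minimax for symmetric (skew) finite games: there is a mixed strategy `p`
whose payoff against every pure strategy is nonnegative. -/
theorem skew_game_value (V : Type) [Fintype V] [Nonempty V] (A : V → V → ℝ)
    (skew : ∀ u v, A v u = -A u v) :
    ∃ p : V → ℝ, (∀ v, 0 ≤ p v) ∧ (∑ v, p v) = 1 ∧
      ∀ y, 0 ≤ ∑ x, p x * A x y := by
  classical
  -- the linear "payoff" map
  let L : (V → ℝ) →ₗ[ℝ] (V → ℝ) :=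
    { toFun := fun p => fun y => ∑ x, p x * A x y
      map_add' := by
        intro a b; funext y; simp [add_mul, Finset.sum_add_distrib]
      map_smul' := by
        intro c a; funext y; simp [Finset.mul_sum, mul_assoc] }
  have hLcont : Continuous L := L.continuous_of_finiteDimensional
  set S : Set (V → ℝ) := stdSimplex ℝ V with hS
  set t : Set (V → ℝ) := L '' S with ht
  set s : Set (V → ℝ) := {x | ∀ v, 0 ≤ x v} with hs
  by_cases hdisj : Disjoint s t
  · exfalso
    have hsc : Convex ℝ s := by
      intro x hx y hy a b ha hb hab
      intro v
      have := hx v; have := hy v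
      simp only [Pi.add_apply, Pi.smul_apply, smul_eq_mul]
      nlinarith
    have hscl : IsClosed s := by
      have : s = ⋂ v, {x : V → ℝ | 0 ≤ x v} := by
        ext x; simp [hs, Set.mem_iInter]
      rw [this]
      exact isClosed_iInter fun v => isClosed_le continuous_const (continuous_apply v)
    have htc : Convex ℝ t := (convex_stdSimplex ℝ V).linear_image L
    have htcp : IsCompact t := (isCompact_stdSimplex ℝ V).image hLcont
    obtain ⟨f, u, v, hfs, huv, hft⟩ :=
      geometric_hahn_banach_closed_compact hsc hscl htc htcp hdisj
    -- f ≤ 0 on the orthant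
    have hf_nonpos : ∀ a ∈ s, f a ≤ 0 := by
      intro a ha
      by_contra h
      push_neg at h
      obtain ⟨c, hc⟩ : ∃ c : ℝ, u < c * f a := ⟨(u + 1 + |u|) / f a, by
        rw [div_mul_cancel₀ _ (ne_of_gt h)]
        have := abs_nonneg u; linarith⟩
      have hca : c • a ∈ s := by
        intro w
        have h1 : 0 ≤ c := by
          by_contra hcneg
          push_neg at hcneg
          have h0 : (0 : V → ℝ) ∈ s := by intro w; simp [hs]
          have := hfs 0 h0
          simp at this
          nlinarith [hfs a ha]
        have := ha w
        simp only [Pi.smul_apply, smul_eq_mul]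
        positivity
      have := hfs _ hca
      rw [map_smul, smul_eq_mul] at this
      linarith
    have hu0 : 0 < u := by
      have h0 : (0 : V → ℝ) ∈ s := by intro w; simp [hs]
      have := hfs 0 h0; simpa using this
    -- coefficients of f
    set c : V → ℝ := fun w => f (Pi.single w 1) with hc
    have hcnonpos : ∀ w, c w ≤ 0 := by
      intro w
      apply hf_nonpos
      intro w'
      by_cases h : w' = w <;> simp [Pi.single_apply, h]
    have hf_eval : ∀ x : V → ℝ, f x = ∑ w, x w * c w := by
      intro x
      have hxsum : x = ∑ w, x w • (Pi.single w (1 : ℝ) : V → ℝ) := by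
        funext w'
        simp [Finset.sum_apply, Pi.single_apply, mul_comm]
      conv_lhs => rw [hxsum]
      rw [map_sum]
      simp [hc, smul_eq_mul]
    set d : V → ℝ := fun w => -c w with hd
    have hdnn : ∀ w, 0 ≤ d w := fun w => by simpa [hd] using hcnonpos w
    have hdpos : 0 < ∑ w, d w := by
      rcases lt_or_eq_of_le (Finset.sum_nonneg fun w _ => hdnn w) with h | h
      · exact h
      · exfalso
        have hzero : ∀ w, d w = 0 := by
          intro w
          have := Finset.sum_eq_zero_iff_of_nonneg (fun w _ => hdnn w) |>.mp h.symm
          exact this w (mem_univ w)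
        -- then f vanishes identically, contradicting v < f b on nonempty t
        obtain ⟨w0⟩ := ‹Nonempty V›
        have hb : L (Pi.single w0 1) ∈ t := ⟨Pi.single w0 1, single_mem_stdSimplex ℝ w0, rfl⟩
        have := hft _ hb
        rw [hf_eval] at this
        have : (0:ℝ) < ∑ w, (L (Pi.single w0 1)) w * c w := by linarith [huv, hu0, this]
        have heq : ∀ w, c w = 0 := by
          intro w; have := hzero w; simp [hd] at this; linarith
        simp [heq] at this
    set q : V → ℝ := fun w => d w / (∑ w, d w) with hq
    have hqS : q ∈ S := by
      constructor
      · intro w; exact div_nonneg (hdnn w) hdpos.le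
      · rw [← Finset.sum_div, div_self hdpos.ne']
    have hqt : L q ∈ t := ⟨q, hqS, rfl⟩
    have hpos := hft _ hqt
    rw [hf_eval] at hpos
    -- f (L q) = ∑ y (L q) y * c y = - (1/Σd) * ∑_{x,y} d x d y A x y / Σd ... sign analysis
    have hLq : ∀ y, (L q) y = ∑ x, q x * A x y := fun y => rfl
    have hexp : ∑ y, (L q) y * c y = -(∑ y, ∑ x, q x * A x y * d y) := by
      simp only [hLq]
      rw [← Finset.sum_neg_distrib]
      apply Finset.sum_congr rfl
      intro y _
      rw [Finset.sum_mul, ← Finset.sum_neg_distrib]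
      apply Finset.sum_congr rfl
      intro x _
      have : c y = -d y := by simp [hd]
      rw [this]; ring
    -- ∑_{x,y} q x * A x y * d y has the same sign as the skew quadratic form which is 0
    have hskewzero : ∑ y, ∑ x, d x * A x y * d y = 0 := by
      have hself : (∑ y, ∑ x, d x * A x y * d y) = -(∑ y, ∑ x, d x * A x y * d y) := by
        calc (∑ y, ∑ x, d x * A x y * d y) = ∑ x, ∑ y, d x * A x y * d y :=
              Finset.sum_comm
          _ = ∑ x, ∑ y, -(d y * A y x * d x) := by
              apply Finset.sum_congr rfl; intro x _
              apply Finset.sum_congr rfl; intro y _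
              rw [skew y x]; ring
          _ = -(∑ x, ∑ y, d y * A y x * d x) := by
              simp [Finset.sum_neg_distrib]
          _ = -(∑ y, ∑ x, d x * A x y * d y) := rfl
      linarith
    have hqd : ∑ y, ∑ x, q x * A x y * d y = 0 := by
      have : ∑ y, ∑ x, q x * A x y * d y = (∑ y, ∑ x, d x * A x y * d y) / (∑ w, d w) := by
        rw [Finset.sum_div]
        apply Finset.sum_congr rfl
        intro y _
        rw [Finset.sum_div]
        apply Finset.sum_congr rfl
        intro x _
        simp only [hq]
        ring
      rw [this, hskewzero, zero_div]
    rw [hexp, hqd] at hpos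
    simp at hpos
    linarith [hu0, huv]
  · -- not disjoint: extract the good distribution
    rw [Set.not_disjoint_iff] at hdisj
    obtain ⟨x, hxs, hxt⟩ := hdisj
    obtain ⟨p, hpS, hpx⟩ := hxt
    refine ⟨p, hpS.1, hpS.2, ?_⟩
    intro y
    have := hxs y
    rw [← hpx] at this
    exact this

open Finset

section Sampling

variable {V : Type} [Fintype V] [DecidableEq V] (p : V → ℝ)

/-- product weight of a sample tuple -/
def Wt (n : ℕ) (s : Fin n → V) : ℝ := ∏ i, p (s i)

lemma Wt_nonneg (hp0 : ∀ v, 0 ≤ p v) {n : ℕ} (s : Fin n → V) : 0 ≤ Wt p n s :=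
  Finset.prod_nonneg fun i _ => hp0 (s i)

omit [DecidableEq V] in
lemma sum_prod_eval {n : ℕ} (g : Fin n → V → ℝ) :
    ∑ s : Fin n → V, ∏ i, g i (s i) = ∏ i, ∑ v, g i v := by
  classical
  rw [Finset.prod_univ_sum]
  rw [Fintype.piFinset_univ]

omit [DecidableEq V] in
lemma sum_Wt (hp1 : ∑ v, p v = 1) (n : ℕ) : ∑ s : Fin n → V, Wt p n s = 1 := by
  have := sum_prod_eval (V := V) (fun (_ : Fin n) (v : V) => p v)
  simp only [Wt]
  rw [this]
  rw [Finset.prod_congr rfl fun i _ => hp1]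
  simp

omit [DecidableEq V] in
lemma prod_two {n : ℕ} {j k : Fin n} (hjk : j ≠ k) (F : Fin n → ℝ)
    (hF : ∀ i, i ≠ j → i ≠ k → F i = 1) : ∏ i, F i = F j * F k := by
  rw [← Finset.mul_prod_erase Finset.univ F (Finset.mem_univ j)]
  rw [← Finset.mul_prod_erase (Finset.univ.erase j) F
    (Finset.mem_erase.mpr ⟨Ne.symm hjk, Finset.mem_univ k⟩)]
  rw [Finset.prod_eq_one, mul_one]
  intro i hi
  rw [Finset.mem_erase, Finset.mem_erase] at hi
  exact hF i hi.2.1 hi.1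

lemma expect_single (hp1 : ∑ v, p v = 1) {n : ℕ} (j : Fin n) (g : V → ℝ) :
    ∑ s : Fin n → V, Wt p n s * g (s j) = ∑ v, p v * g v := by
  classical
  have key : ∀ s : Fin n → V,
      Wt p n s * g (s j) = ∏ i, (p (s i) * (if i = j then g (s i) else 1)) := by
    intro s
    rw [Finset.prod_mul_distrib]
    congr 1
    rw [Finset.prod_ite_eq' Finset.univ j (fun i => g (s i))]
    simp
  calc ∑ s : Fin n → V, Wt p n s * g (s j)
      = ∑ s : Fin n → V, ∏ i, (p (s i) * (if i = j then g (s i) else 1)) := by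
        exact Finset.sum_congr rfl fun s _ => key s
    _ = ∏ i, ∑ v, (p v * (if i = j then g v else 1)) := by
        exact sum_prod_eval (fun i v => p v * (if i = j then g v else 1))
    _ = ∑ v, p v * g v := by
        rw [Finset.prod_eq_single j]
        · simp
        · intro i _ hij
          simp [hij, hp1]
        · simp

lemma expect_pair (hp1 : ∑ v, p v = 1) {n : ℕ} {j k : Fin n} (hjk : j ≠ k) (g h : V → ℝ) :
    ∑ s : Fin n → V, Wt p n s * (g (s j) * h (s k)) =
      (∑ v, p v * g v) * (∑ v, p v * h v) := by
  classical
  have key : ∀ s : Fin n → V,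
      Wt p n s * (g (s j) * h (s k)) =
        ∏ i, (p (s i) * (if i = j then g (s i) else if i = k then h (s i) else 1)) := by
    intro s
    rw [Finset.prod_mul_distrib]
    congr 1
    rw [prod_two hjk _ ?_]
    · simp [Ne.symm hjk]
    · intro i hij hik; simp [hij, hik]
  calc ∑ s : Fin n → V, Wt p n s * (g (s j) * h (s k))
      = ∑ s : Fin n → V,
          ∏ i, (p (s i) * (if i = j then g (s i) else if i = k then h (s i) else 1)) :=
        Finset.sum_congr rfl fun s _ => key s
    _ = ∏ i, ∑ v, (p v * (if i = j then g v else if i = k then h v else 1)) := by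
        exact sum_prod_eval (fun i v => p v * (if i = j then g v else if i = k then h v else 1))
    _ = (∑ v, p v * g v) * (∑ v, p v * h v) := by
        rw [prod_two hjk _ ?_]
        · simp [Ne.symm hjk]
        · intro i hij hik; simp [hij, hik, hp1]


/-- Chebyshev step: a `3/8`-heavy set is hit at least `m/8` times with probability `≥ 1/2`. -/
lemma cheb_hit (hp0 : ∀ v, 0 ≤ p v) (hp1 : ∑ v, p v = 1)
    (B : Finset V) (hq : 3/8 ≤ ∑ x ∈ B, p x) {m : ℕ} (hm : 32 ≤ m) :
    (1:ℝ)/2 ≤ ∑ t ∈ Finset.univ.filter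
      (fun t : Fin m → V => m/8 ≤ (Finset.univ.filter fun j => t j ∈ B).card),
      Wt p m t := by
  classical
  set q : ℝ := ∑ x ∈ B, p x with hqdef
  have hq1 : q ≤ 1 := by
    rw [← hp1]
    exact Finset.sum_le_sum_of_subset_of_nonneg (Finset.subset_univ B)
      (fun v _ _ => hp0 v)
  have hq0 : 0 ≤ q := Finset.sum_nonneg fun v _ => hp0 v
  set χ : V → ℝ := fun v => if v ∈ B then 1 else 0 with hχ
  have hχq : ∑ v, p v * χ v = q := by
    simp only [hχ, mul_ite, mul_one, mul_zero]
    rw [Finset.sum_ite_mem, Finset.univ_inter]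
  set X : (Fin m → V) → ℝ := fun t => ∑ j, χ (t j) with hX
  have hXcard : ∀ t : Fin m → V,
      X t = ((Finset.univ.filter fun j => t j ∈ B).card : ℝ) := by
    intro t
    simp only [hX, hχ, Finset.card_filter]
    push_cast
    apply Finset.sum_congr rfl
    intro j _
    split <;> simp
  have hsq1 : ∀ v, (χ v - q)^2 ≤ 1 := by
    intro v
    have : χ v = 0 ∨ χ v = 1 := by simp only [hχ]; split <;> simp
    rcases this with h | h <;> rw [h] <;> nlinarith
  -- variance bound
  have hvar : ∑ t : Fin m → V, Wt p m t * (X t - m * q)^2 ≤ m := by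
    have hexpand : ∀ t : Fin m → V, (X t - m * q)^2 =
        ∑ j, ∑ k, (χ (t j) - q) * (χ (t k) - q) := by
      intro t
      have h1 : X t - m * q = ∑ j, (χ (t j) - q) := by
        rw [Finset.sum_sub_distrib]
        simp [hX, Finset.card_univ, mul_comm]
      rw [h1, sq, Finset.sum_mul_sum]
    calc ∑ t : Fin m → V, Wt p m t * (X t - m * q)^2
        = ∑ t : Fin m → V, ∑ j, ∑ k, Wt p m t * ((χ (t j) - q) * (χ (t k) - q)) := by
          apply Finset.sum_congr rfl
          intro t _
          rw [hexpand t, Finset.mul_sum]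
          apply Finset.sum_congr rfl
          intro j _
          rw [Finset.mul_sum]
      _ = ∑ j, ∑ k, ∑ t : Fin m → V, Wt p m t * ((χ (t j) - q) * (χ (t k) - q)) := by
          rw [Finset.sum_comm]
          apply Finset.sum_congr rfl
          intro j _
          rw [Finset.sum_comm]
      _ ≤ ∑ j : Fin m, ∑ k : Fin m, (if j = k then (1:ℝ) else 0) := by
          apply Finset.sum_le_sum
          intro j _
          apply Finset.sum_le_sum
          intro k _
          by_cases hjk : j = k
          · subst hjk
            rw [if_pos rfl]
            have heq : ∑ t : Fin m → V, Wt p m t * ((χ (t j) - q) * (χ (t j) - q)) =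
                ∑ v, p v * ((fun v => (χ v - q) * (χ v - q)) v) :=
              expect_single p hp1 j (fun v => (χ v - q) * (χ v - q))
            rw [heq]
            calc ∑ v, p v * ((fun v => (χ v - q) * (χ v - q)) v)
                ≤ ∑ v, p v * 1 := by
                  apply Finset.sum_le_sum
                  intro v _
                  apply mul_le_mul_of_nonneg_left _ (hp0 v)
                  show (χ v - q) * (χ v - q) ≤ 1
                  rw [← sq]
                  exact hsq1 v
              _ = 1 := by simp only [mul_one]; exact hp1
          · rw [if_neg hjk]
            have heq : ∑ t : Fin m → V, Wt p m t * ((χ (t j) - q) * (χ (t k) - q)) =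
                (∑ v, p v * ((fun v => χ v - q) v)) * (∑ v, p v * ((fun v => χ v - q) v)) :=
              expect_pair p hp1 hjk (fun v => χ v - q) (fun v => χ v - q)
            rw [heq]
            have hz : ∑ v, p v * ((fun v => χ v - q) v) = 0 := by
              simp only [mul_sub]
              rw [Finset.sum_sub_distrib, hχq, ← Finset.sum_mul, hp1]
              ring
            rw [hz, zero_mul]
      _ = m := by simp
  -- Markov / conclusion
  set P : (Fin m → V) → Prop := fun t => m/8 ≤ (Finset.univ.filter fun j => t j ∈ B).card
    with hP
  have hsplit := Finset.sum_filter_add_sum_filter_not Finset.univ P (Wt p m)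
  have hbadb : ∑ t ∈ Finset.univ.filter (fun t => ¬ P t), Wt p m t ≤ 1/2 := by
    have hmpos : (0:ℝ) < m := by positivity
    have hkey : ∀ t ∈ Finset.univ.filter (fun t => ¬ P t),
        ((m:ℝ)/4)^2 * Wt p m t ≤ Wt p m t * (X t - m * q)^2 := by
      intro t ht
      rw [Finset.mem_filter] at ht
      have hcard : (Finset.univ.filter fun j => t j ∈ B).card < m/8 := by
        have := ht.2
        simp only [hP] at this
        omega
      have hXle : X t ≤ (m:ℝ)/8 := by
        rw [hXcard t]
        have h8 : 8 * ((Finset.univ.filter fun j => t j ∈ B).card + 1) ≤ m := by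
          have := Nat.succ_le_of_lt hcard
          calc 8 * ((Finset.univ.filter fun j => t j ∈ B).card + 1) ≤ 8 * (m/8) :=
                Nat.mul_le_mul_left _ this
            _ ≤ m := Nat.mul_div_le m 8
        have := (Nat.cast_le (α := ℝ)).mpr h8
        push_cast at this
        linarith
      have hqm : 3 * (m:ℝ) / 8 ≤ m * q := by
        have : (3:ℝ)/8 ≤ q := hq
        nlinarith
      have hdist : (m:ℝ)/4 ≤ m * q - X t := by linarith
      have h0 : (0:ℝ) ≤ (m:ℝ)/4 := by positivity
      have hsq : ((m:ℝ)/4)^2 ≤ (X t - m * q)^2 := by nlinarith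
      calc ((m:ℝ)/4)^2 * Wt p m t ≤ (X t - m*q)^2 * Wt p m t := by
            apply mul_le_mul_of_nonneg_right hsq (Wt_nonneg p hp0 t)
        _ = Wt p m t * (X t - m*q)^2 := by ring
    have hsum : ((m:ℝ)/4)^2 * ∑ t ∈ Finset.univ.filter (fun t => ¬ P t), Wt p m t ≤ m := by
      rw [Finset.mul_sum]
      calc ∑ t ∈ Finset.univ.filter (fun t => ¬ P t), ((m:ℝ)/4)^2 * Wt p m t
          ≤ ∑ t ∈ Finset.univ.filter (fun t => ¬ P t), Wt p m t * (X t - m * q)^2 :=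
            Finset.sum_le_sum hkey
        _ ≤ ∑ t : Fin m → V, Wt p m t * (X t - m * q)^2 := by
            apply Finset.sum_le_sum_of_subset_of_nonneg (Finset.filter_subset _ _)
            intro t _ _
            exact mul_nonneg (Wt_nonneg p hp0 t) (sq_nonneg _)
        _ ≤ m := hvar
    have hm2 : (0:ℝ) < ((m:ℝ)/4)^2 := by positivity
    have := (le_div_iff₀' hm2).mpr hsum
    calc ∑ t ∈ Finset.univ.filter (fun t => ¬ P t), Wt p m t
        ≤ (m:ℝ) / ((m:ℝ)/4)^2 := this
      _ = 16 / m := by field_simp; ring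
      _ ≤ 1/2 := by
        rw [div_le_div_iff₀ hmpos (by norm_num)]
        have : (32:ℝ) ≤ m := by exact_mod_cast hm
        linarith
  have htot : ∑ t ∈ Finset.univ.filter P, Wt p m t +
      ∑ t ∈ Finset.univ.filter (fun t => ¬ P t), Wt p m t = 1 := by
    rw [hsplit, sum_Wt p hp1]
  linarith

/-- the number of boolean vectors with values forced on a set `J` -/
lemma card_forced {m : ℕ} (J : Finset (Fin m)) (c : Fin m → Bool) :
    ((Finset.univ : Finset (Fin m → Bool)).filter (fun σ => ∀ j ∈ J, σ j = c j)).card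
      = 2^(m - J.card) := by
  classical
  have hset : (Finset.univ.filter (fun σ : Fin m → Bool => ∀ j ∈ J, σ j = c j)) =
      Fintype.piFinset (fun j => if j ∈ J then {c j} else Finset.univ) := by
    ext σ
    simp only [Finset.mem_filter, Finset.mem_univ, true_and, Fintype.mem_piFinset]
    constructor
    · intro h j
      by_cases hj : j ∈ J
      · rw [if_pos hj, Finset.mem_singleton]
        exact h j hj
      · rw [if_neg hj]
        exact Finset.mem_univ _
    · intro h j hj
      have := h j
      rw [if_pos hj, Finset.mem_singleton] at this
      exact this
  rw [hset, Fintype.card_piFinset]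
  rw [← Finset.prod_filter_mul_prod_filter_not Finset.univ (· ∈ J)]
  have h1 : Finset.univ.filter (· ∈ J) = J := by
    ext j; simp
  have h2 : ∀ j ∈ J, (if j ∈ J then ({c j} : Finset Bool) else Finset.univ).card = 1 := by
    intro j hj; rw [if_pos hj]; simp
  have h3 : ∀ j ∈ Finset.univ.filter (¬ · ∈ J),
      (if j ∈ J then ({c j} : Finset Bool) else Finset.univ).card = 2 := by
    intro j hj
    rw [Finset.mem_filter] at hj
    rw [if_neg hj.2]
    simp
  rw [h1, Finset.prod_congr rfl h2, Finset.prod_congr rfl h3]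
  rw [Finset.prod_const_one, Finset.prod_const, one_mul]
  congr 1
  rw [Finset.filter_not, Finset.filter_mem_eq_inter, Finset.univ_inter,
    Finset.card_sdiff_of_subset (Finset.subset_univ J)]
  simp

/-- counting swap patterns: at most `2^(m-r)` swap vectors realize the
"first coordinates avoid `B`, at least `r` second coordinates hit `B`" pattern. -/
lemma count_swaps {m : ℕ} (r : ℕ) (s t : Fin m → V) (B : Finset V) :
    ((Finset.univ : Finset (Fin m → Bool)).filter (fun σ =>
      (∀ j, (if σ j then t j else s j) ∉ B) ∧
      r ≤ (Finset.univ.filter fun j => (if σ j then s j else t j) ∈ B).card)).card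
      ≤ 2^(m - r) := by
  classical
  set Φ := (Finset.univ : Finset (Fin m → Bool)).filter (fun σ =>
      (∀ j, (if σ j then t j else s j) ∉ B) ∧
      r ≤ (Finset.univ.filter fun j => (if σ j then s j else t j) ∈ B).card) with hΦ
  rcases Φ.eq_empty_or_nonempty with h | ⟨σ₀, hσ₀⟩
  · rw [h]; simp
  · rw [hΦ, Finset.mem_filter] at hσ₀
    obtain ⟨-, hav₀, hhit₀⟩ := hσ₀
    set J := Finset.univ.filter (fun j : Fin m => s j ∈ B ∨ t j ∈ B) with hJ
    have hJr : r ≤ J.card := by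
      refine le_trans hhit₀ (Finset.card_le_card ?_)
      intro j hj
      rw [Finset.mem_filter] at hj ⊢
      refine ⟨Finset.mem_univ j, ?_⟩
      by_cases h : σ₀ j
      · left; rw [if_pos h] at hj; exact hj.2
      · right; rw [if_neg h] at hj; exact hj.2
    set forced : Fin m → Bool := fun j => decide (s j ∈ B) with hforced
    have hsub : Φ ⊆ Finset.univ.filter (fun σ => ∀ j ∈ J, σ j = forced j) := by
      intro σ hσ
      rw [hΦ, Finset.mem_filter] at hσ
      obtain ⟨-, hav, -⟩ := hσ
      rw [Finset.mem_filter]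
      refine ⟨Finset.mem_univ σ, ?_⟩
      intro j hj
      rw [hJ, Finset.mem_filter] at hj
      have := hav j
      by_cases hs : s j ∈ B
      · have hσj : σ j = true := by
          by_contra hσj
          rw [Bool.not_eq_true] at hσj
          rw [hσj] at this
          simp at this
          exact this hs
        rw [hσj, hforced]
        simp [hs]
      · have ht : t j ∈ B := by tauto
        have hσj : σ j = false := by
          by_contra hσj
          rw [Bool.not_eq_false] at hσj
          rw [hσj] at this
          simp at this
          exact this ht
        rw [hσj, hforced]
        simp [hs]
    calc Φ.card ≤ (Finset.univ.filter (fun σ : Fin m → Bool => ∀ j ∈ J, σ j = forced j)).card :=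
          Finset.card_le_card hsub
      _ = 2 ^ (m - J.card) := card_forced J forced
      _ ≤ 2 ^ (m - r) := Nat.pow_le_pow_right (by norm_num) (Nat.sub_le_sub_left hJr m)
/-- the involution swapping sample pairs according to `σ` -/
def swapEquiv {V : Type} (m : ℕ) (σ : Fin m → Bool) :
    ((Fin m → V) × (Fin m → V)) ≃ ((Fin m → V) × (Fin m → V)) where
  toFun x := (fun j => if σ j then x.2 j else x.1 j, fun j => if σ j then x.1 j else x.2 j)
  invFun x := (fun j => if σ j then x.2 j else x.1 j, fun j => if σ j then x.1 j else x.2 j)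
  left_inv x := by
    rw [Prod.mk.injEq]
    constructor <;> funext j <;> by_cases h : σ j <;> simp [h]
  right_inv x := by
    rw [Prod.mk.injEq]
    constructor <;> funext j <;> by_cases h : σ j <;> simp [h]

lemma swapEquiv_fst {V : Type} {m : ℕ} (σ : Fin m → Bool) (x : (Fin m → V) × (Fin m → V)) :
    (swapEquiv m σ x).1 = fun j => if σ j then x.2 j else x.1 j := rfl

lemma swapEquiv_snd {V : Type} {m : ℕ} (σ : Fin m → Bool) (x : (Fin m → V) × (Fin m → V)) :
    (swapEquiv m σ x).2 = fun j => if σ j then x.1 j else x.2 j := rfl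

/-- The ε-net existence theorem via double sampling. -/
lemma exists_net [Nonempty V] (hp0 : ∀ v, 0 ≤ p v) (hp1 : ∑ v, p v = 1)
    (B : V → Finset V) (D : ℕ)
    (htrace : ∀ S : Finset V,
      ((Finset.univ : Finset V).image fun y => S ∩ B y).card ≤ (S.card + 1) ^ D)
    {m : ℕ} (hm : 32 ≤ m)
    (hbig : 2 * ((2*m+1)^D * 2^(m - m/8)) < 2^m) :
    ∃ s : Fin m → V, ∀ y, 3/8 ≤ ∑ x ∈ B y, p x → ∃ j, s j ∈ B y := by
  classical
  by_contra hcon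
  push_neg at hcon
  choose ys hys1 hys2 using hcon
  set r : ℕ := m/8 with hrdef
  set E2 : ((Fin m → V) × (Fin m → V)) → Prop := fun x => ∃ y,
    (∀ j, x.1 j ∉ B y) ∧ r ≤ (Finset.univ.filter fun j => x.2 j ∈ B y).card with hE2
  set T : ℝ := ∑ x : (Fin m → V) × (Fin m → V),
    Wt p m x.1 * Wt p m x.2 * (if E2 x then 1 else 0) with hT
  -- Step A : 1 ≤ 2 T
  have hA : (1:ℝ) ≤ 2 * T := by
    have h1 : ∀ s : Fin m → V, Wt p m s ≤ Wt p m s *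
        (2 * ∑ t ∈ Finset.univ.filter
          (fun t : Fin m → V => r ≤ (Finset.univ.filter fun j => t j ∈ B (ys s)).card),
          Wt p m t) := by
      intro s
      have hc := cheb_hit p hp0 hp1 (B (ys s)) (hys1 s) hm
      have hw := Wt_nonneg p hp0 s
      nlinarith [hc]
    calc (1:ℝ) = ∑ s : Fin m → V, Wt p m s := (sum_Wt p hp1 m).symm
      _ ≤ ∑ s : Fin m → V, Wt p m s *
          (2 * ∑ t ∈ Finset.univ.filter
            (fun t : Fin m → V => r ≤ (Finset.univ.filter fun j => t j ∈ B (ys s)).card),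
            Wt p m t) := Finset.sum_le_sum fun s _ => h1 s
      _ = 2 * ∑ s : Fin m → V, ∑ t : Fin m → V, Wt p m s * Wt p m t *
          (if r ≤ (Finset.univ.filter fun j => t j ∈ B (ys s)).card then 1 else 0) := by
          rw [Finset.mul_sum]
          apply Finset.sum_congr rfl
          intro s _
          rw [Finset.sum_filter, Finset.mul_sum, Finset.mul_sum, Finset.mul_sum]
          apply Finset.sum_congr rfl
          intro t _
          split <;> ring
      _ ≤ 2 * ∑ s : Fin m → V, ∑ t : Fin m → V, Wt p m s * Wt p m t *
          (if E2 (s, t) then 1 else 0) := by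
          apply mul_le_mul_of_nonneg_left _ (by norm_num)
          apply Finset.sum_le_sum
          intro s _
          apply Finset.sum_le_sum
          intro t _
          have hw : 0 ≤ Wt p m s * Wt p m t :=
            mul_nonneg (Wt_nonneg p hp0 s) (Wt_nonneg p hp0 t)
          apply mul_le_mul_of_nonneg_left _ hw
          split
          · rename_i hcond
            rw [if_pos]
            exact ⟨ys s, fun j => hys2 s j, hcond⟩
          · split <;> norm_num
      _ = 2 * T := by rw [hT, Fintype.sum_prod_type]
  -- Step B : T is invariant under coordinate swaps
  have hWinv : ∀ (σ : Fin m → Bool) (x : (Fin m → V) × (Fin m → V)),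
      Wt p m (swapEquiv m σ x).1 * Wt p m (swapEquiv m σ x).2 =
        Wt p m x.1 * Wt p m x.2 := by
    intro σ x
    simp only [Wt, swapEquiv_fst, swapEquiv_snd]
    rw [← Finset.prod_mul_distrib, ← Finset.prod_mul_distrib]
    apply Finset.prod_congr rfl
    intro j _
    by_cases h : σ j <;> simp [h, mul_comm]
  have hB : ∀ σ : Fin m → Bool, T = ∑ x : (Fin m → V) × (Fin m → V),
      Wt p m x.1 * Wt p m x.2 * (if E2 (swapEquiv m σ x) then 1 else 0) := by
    intro σ
    rw [hT]
    refine (Fintype.sum_equiv (swapEquiv m σ)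
      (fun x => Wt p m x.1 * Wt p m x.2 * (if E2 (swapEquiv m σ x) then 1 else 0))
      (fun x => Wt p m x.1 * Wt p m x.2 * (if E2 x then 1 else 0)) ?_).symm
    intro x
    show Wt p m x.1 * Wt p m x.2 * (if E2 (swapEquiv m σ x) then 1 else 0) =
      Wt p m (swapEquiv m σ x).1 * Wt p m (swapEquiv m σ x).2 *
        (if E2 (swapEquiv m σ x) then 1 else 0)
    rw [hWinv σ x]
  -- Step C : for each pair, few swaps realize E2
  have hC : ∀ x : (Fin m → V) × (Fin m → V),
      (∑ σ : Fin m → Bool, (if E2 (swapEquiv m σ x) then (1:ℝ) else 0)) ≤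
        ((2*m+1)^D * 2^(m - r) : ℕ) := by
    intro x
    obtain ⟨s, t⟩ := x
    set S : Finset V := (Finset.univ.image s) ∪ (Finset.univ.image t) with hS
    have hScard : S.card ≤ 2*m := by
      calc S.card ≤ (Finset.univ.image s).card + (Finset.univ.image t).card :=
            Finset.card_union_le _ _
        _ ≤ m + m := by
            apply add_le_add <;>
              exact le_trans (Finset.card_image_le) (by simp)
        _ = 2*m := by ring
    set traces : Finset (Finset V) := Finset.univ.image (fun y => S ∩ B y) with htraces
    have htrc : traces.card ≤ (2*m+1)^D := by
      calc traces.card ≤ (S.card + 1)^D := htrace S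
        _ ≤ (2*m+1)^D := Nat.pow_le_pow_left (by omega) D
    set rep : Finset V → V := fun c =>
      if h : ∃ y, S ∩ B y = c then Classical.choose h else Classical.arbitrary V with hrep
    have hrepspec : ∀ c ∈ traces, S ∩ B (rep c) = c := by
      intro c hc
      rw [htraces, Finset.mem_image] at hc
      obtain ⟨y, -, hy⟩ := hc
      have hex : ∃ y, S ∩ B y = c := ⟨y, hy⟩
      rw [hrep]
      simp only [dif_pos hex]
      exact Classical.choose_spec hex
    have hpt : ∀ σ : Fin m → Bool, (if E2 (swapEquiv m σ (s, t)) then (1:ℝ) else 0) ≤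
        ∑ c ∈ traces, (if (∀ j, (swapEquiv m σ (s,t)).1 j ∉ B (rep c)) ∧
          r ≤ (Finset.univ.filter fun j => (swapEquiv m σ (s,t)).2 j ∈ B (rep c)).card
          then (1:ℝ) else 0) := by
      intro σ
      split
      · rename_i hE
        obtain ⟨y, hav, hhit⟩ := hE
        set c₀ : Finset V := S ∩ B y with hc₀
        have hc₀mem : c₀ ∈ traces := by
          rw [htraces, Finset.mem_image]
          exact ⟨y, Finset.mem_univ y, rfl⟩
        have htransfer : ∀ v ∈ S, (v ∈ B y ↔ v ∈ B (rep c₀)) := by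
          intro v hv
          constructor
          · intro hvy
            have : v ∈ S ∩ B y := Finset.mem_inter.mpr ⟨hv, hvy⟩
            rw [← hc₀] at this
            rw [← hrepspec c₀ hc₀mem] at this
            exact (Finset.mem_inter.mp this).2
          · intro hvr
            have : v ∈ S ∩ B (rep c₀) := Finset.mem_inter.mpr ⟨hv, hvr⟩
            rw [hrepspec c₀ hc₀mem, hc₀] at this
            exact (Finset.mem_inter.mp this).2
        have hfstS : ∀ j, (swapEquiv m σ (s,t)).1 j ∈ S := by
          intro j
          rw [swapEquiv_fst]
          by_cases h : σ j <;> simp only [h, if_true, if_false, hS] <;>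
            [skip; skip] <;> rw [Finset.mem_union]
          · right; exact Finset.mem_image_of_mem t (Finset.mem_univ j)
          · left; exact Finset.mem_image_of_mem s (Finset.mem_univ j)
        have hsndS : ∀ j, (swapEquiv m σ (s,t)).2 j ∈ S := by
          intro j
          rw [swapEquiv_snd]
          by_cases h : σ j <;> simp only [h, if_true, if_false, hS] <;>
            [skip; skip] <;> rw [Finset.mem_union]
          · left; exact Finset.mem_image_of_mem s (Finset.mem_univ j)
          · right; exact Finset.mem_image_of_mem t (Finset.mem_univ j)
        have hP : (∀ j, (swapEquiv m σ (s,t)).1 j ∉ B (rep c₀)) ∧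
            r ≤ (Finset.univ.filter fun j =>
              (swapEquiv m σ (s,t)).2 j ∈ B (rep c₀)).card := by
          constructor
          · intro j hj
            exact hav j ((htransfer _ (hfstS j)).mpr hj)
          · refine le_trans hhit (le_of_eq ?_)
            congr 1
            apply Finset.filter_congr
            intro j _
            exact htransfer _ (hsndS j)
        calc (1:ℝ) = (if (∀ j, (swapEquiv m σ (s,t)).1 j ∉ B (rep c₀)) ∧
              r ≤ (Finset.univ.filter fun j =>
                (swapEquiv m σ (s,t)).2 j ∈ B (rep c₀)).card then (1:ℝ) else 0) := by
              rw [if_pos hP]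
          _ ≤ _ := by
              apply Finset.single_le_sum (f := fun c =>
                (if (∀ j, (swapEquiv m σ (s,t)).1 j ∉ B (rep c)) ∧
                  r ≤ (Finset.univ.filter fun j =>
                    (swapEquiv m σ (s,t)).2 j ∈ B (rep c)).card then (1:ℝ) else 0))
                (fun c _ => by split <;> norm_num) hc₀mem
      · apply Finset.sum_nonneg
        intro c _
        split <;> norm_num
    calc ∑ σ : Fin m → Bool, (if E2 (swapEquiv m σ (s,t)) then (1:ℝ) else 0)
        ≤ ∑ σ : Fin m → Bool, ∑ c ∈ traces,
            (if (∀ j, (swapEquiv m σ (s,t)).1 j ∉ B (rep c)) ∧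
              r ≤ (Finset.univ.filter fun j =>
                (swapEquiv m σ (s,t)).2 j ∈ B (rep c)).card then (1:ℝ) else 0) :=
          Finset.sum_le_sum fun σ _ => hpt σ
      _ = ∑ c ∈ traces, ∑ σ : Fin m → Bool,
            (if (∀ j, (swapEquiv m σ (s,t)).1 j ∉ B (rep c)) ∧
              r ≤ (Finset.univ.filter fun j =>
                (swapEquiv m σ (s,t)).2 j ∈ B (rep c)).card then (1:ℝ) else 0) :=
          Finset.sum_comm
      _ ≤ ∑ _c ∈ traces, ((2:ℝ)^(m - r)) := by
          apply Finset.sum_le_sum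
          intro c _
          have hcount := count_swaps (V := V) r s t (B (rep c))
          have hconv : ∑ σ : Fin m → Bool,
              (if (∀ j, (swapEquiv m σ (s,t)).1 j ∉ B (rep c)) ∧
                r ≤ (Finset.univ.filter fun j =>
                  (swapEquiv m σ (s,t)).2 j ∈ B (rep c)).card then (1:ℝ) else 0) =
              (((Finset.univ : Finset (Fin m → Bool)).filter (fun σ =>
                (∀ j, (if σ j then t j else s j) ∉ B (rep c)) ∧
                r ≤ (Finset.univ.filter fun j =>
                  (if σ j then s j else t j) ∈ B (rep c)).card)).card : ℝ) := by
            rw [Finset.sum_boole]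
            congr 1
          rw [hconv]
          have : (((Finset.univ : Finset (Fin m → Bool)).filter (fun σ =>
                (∀ j, (if σ j then t j else s j) ∉ B (rep c)) ∧
                r ≤ (Finset.univ.filter fun j =>
                  (if σ j then s j else t j) ∈ B (rep c)).card)).card : ℝ) ≤
              ((2^(m-r) : ℕ) : ℝ) := by
            exact_mod_cast hcount
          simpa using this
      _ = (traces.card : ℝ) * 2^(m-r) := by rw [Finset.sum_const, nsmul_eq_mul]
      _ ≤ ((2*m+1)^D * 2^(m - r) : ℕ) := by
          push_cast
          apply mul_le_mul_of_nonneg_right _ (by positivity)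
          exact_mod_cast htrc
  -- Step D : combine
  have hsum1 : ∑ x : (Fin m → V) × (Fin m → V), Wt p m x.1 * Wt p m x.2 = 1 := by
    rw [Fintype.sum_prod_type]
    have : ∀ s : Fin m → V, ∑ t : Fin m → V, Wt p m s * Wt p m t = Wt p m s := by
      intro s
      rw [← Finset.mul_sum, sum_Wt p hp1 m, mul_one]
    rw [Finset.sum_congr rfl fun s _ => this s, sum_Wt p hp1 m]
  have hD : (2:ℝ)^m * T ≤ ((2*m+1)^D * 2^(m - r) : ℕ) := by
    have h2m : ((2:ℝ))^m = (Fintype.card (Fin m → Bool) : ℝ) := by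
      simp [Fintype.card_fun]
    calc (2:ℝ)^m * T = ∑ _σ : Fin m → Bool, T := by
          rw [Finset.sum_const, nsmul_eq_mul, h2m, Finset.card_univ]
      _ = ∑ σ : Fin m → Bool, ∑ x : (Fin m → V) × (Fin m → V),
            Wt p m x.1 * Wt p m x.2 * (if E2 (swapEquiv m σ x) then 1 else 0) :=
          Finset.sum_congr rfl fun σ _ => hB σ
      _ = ∑ x : (Fin m → V) × (Fin m → V), Wt p m x.1 * Wt p m x.2 *
            (∑ σ : Fin m → Bool, (if E2 (swapEquiv m σ x) then (1:ℝ) else 0)) := by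
          rw [Finset.sum_comm]
          apply Finset.sum_congr rfl
          intro x _
          rw [Finset.mul_sum]
      _ ≤ ∑ x : (Fin m → V) × (Fin m → V), Wt p m x.1 * Wt p m x.2 *
            (((2*m+1)^D * 2^(m - r) : ℕ) : ℝ) := by
          apply Finset.sum_le_sum
          intro x _
          exact mul_le_mul_of_nonneg_left (hC x)
            (mul_nonneg (Wt_nonneg p hp0 _) (Wt_nonneg p hp0 _))
      _ = (((2*m+1)^D * 2^(m - r) : ℕ) : ℝ) := by
          rw [← Finset.sum_mul, hsum1, one_mul]
  -- final contradiction
  have h2mpos : (0:ℝ) < 2^m := by positivity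
  have hTle : T ≤ (((2*m+1)^D * 2^(m - r) : ℕ) : ℝ) / 2^m :=
    (le_div_iff₀' h2mpos).mpr hD
  have : (2:ℝ)^m ≤ 2 * (((2*m+1)^D * 2^(m - r) : ℕ) : ℝ) := by
    have h1 : (1:ℝ) ≤ 2 * ((((2*m+1)^D * 2^(m - r) : ℕ) : ℝ) / 2^m) :=
      le_trans hA (by linarith)
    calc (2:ℝ)^m = 2^m * 1 := by ring
      _ ≤ 2^m * (2 * ((((2*m+1)^D * 2^(m - r) : ℕ) : ℝ) / 2^m)) :=
          mul_le_mul_of_nonneg_left h1 (le_of_lt h2mpos)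
      _ = 2 * (((2*m+1)^D * 2^(m - r) : ℕ) : ℝ) := by
          field_simp
  have hcast : ((2 * ((2*m+1)^D * 2^(m - m/8)) : ℕ) : ℝ) < ((2^m : ℕ) : ℝ) := by
    exact_mod_cast hbig
  push_cast at hcast
  rw [hrdef] at this
  push_cast at this
  linarith

/-- Trace counting for majority-tournament dominator sets: on a finite set `S`,
the family of sets `{x | at least K coordinates of x exceed those of y}` has at
most `(|S|+1)^d` distinct traces. -/
lemma trace_count (d K : ℕ) (f : Fin d → V → ℕ) (hf : ∀ i, Function.Injective (f i))
    (S : Finset V) :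
    ((Finset.univ : Finset V).image fun y => S ∩ (Finset.univ.filter
      (fun x => K ≤ (Finset.univ.filter fun i => f i y < f i x).card))).card
      ≤ (S.card + 1)^d := by
  classical
  set enc : V → (Fin d → ℕ) := fun y i => (S.filter (fun x => f i y < f i x)).card
    with henc
  set tr : V → Finset V := fun y => S ∩ (Finset.univ.filter
      (fun x => K ≤ (Finset.univ.filter fun i => f i y < f i x).card)) with htr
  -- encodings determine traces
  have hkey : ∀ y y', enc y = enc y' → tr y = tr y' := by
    intro y y' he
    have hfi : ∀ i, S.filter (fun x => f i y < f i x) =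
        S.filter (fun x => f i y' < f i x) := by
      intro i
      have hcards : (S.filter (fun x => f i y < f i x)).card =
          (S.filter (fun x => f i y' < f i x)).card := congrFun he i
      rcases le_total (f i y) (f i y') with h | h
      · refine (Finset.eq_of_subset_of_card_le ?_ (le_of_eq hcards)).symm
        intro x hx
        rw [Finset.mem_filter] at hx ⊢
        exact ⟨hx.1, lt_of_le_of_lt h hx.2⟩
      · refine Finset.eq_of_subset_of_card_le ?_ (le_of_eq hcards.symm)
        intro x hx
        rw [Finset.mem_filter] at hx ⊢
        exact ⟨hx.1, lt_of_le_of_lt h hx.2⟩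
    have hiff : ∀ x ∈ S, ∀ i, (f i y < f i x ↔ f i y' < f i x) := by
      intro x hx i
      constructor
      · intro h
        have : x ∈ S.filter (fun x => f i y < f i x) := Finset.mem_filter.mpr ⟨hx, h⟩
        rw [hfi i] at this
        exact (Finset.mem_filter.mp this).2
      · intro h
        have : x ∈ S.filter (fun x => f i y' < f i x) := Finset.mem_filter.mpr ⟨hx, h⟩
        rw [← hfi i] at this
        exact (Finset.mem_filter.mp this).2
    rw [htr]
    ext x
    rw [Finset.mem_inter, Finset.mem_inter, Finset.mem_filter, Finset.mem_filter]
    constructor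
    · rintro ⟨hxS, -, hK⟩
      refine ⟨hxS, Finset.mem_univ x, le_trans hK (le_of_eq ?_)⟩
      congr 1
      apply Finset.filter_congr
      intro i _
      exact hiff x hxS i
    · rintro ⟨hxS, -, hK⟩
      refine ⟨hxS, Finset.mem_univ x, le_trans hK (le_of_eq ?_)⟩
      congr 1
      apply Finset.filter_congr
      intro i _
      exact (hiff x hxS i).symm
  -- traces are surjective image of encodings
  have h1 : (Finset.univ.image tr).card ≤ (Finset.univ.image enc).card := by
    apply Finset.card_le_card_of_surjOn (fun e =>
      if h : ∃ y, enc y = e then tr (Classical.choose h) else ∅)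
    intro c hc
    rw [Finset.coe_image] at hc ⊢
    obtain ⟨y, -, hy⟩ := hc
    refine ⟨enc y, ⟨y, Finset.mem_coe.mpr (Finset.mem_univ y), rfl⟩, ?_⟩
    have hex : ∃ y', enc y' = enc y := ⟨y, rfl⟩
    show (if h : ∃ y', enc y' = enc y then tr (Classical.choose h) else ∅) = c
    rw [dif_pos hex, ← hy]
    exact hkey _ _ (Classical.choose_spec hex)
  -- encodings live in a small box
  have h2 : (Finset.univ.image enc).card ≤ (S.card + 1)^d := by
    have hsub : Finset.univ.image enc ⊆
        Fintype.piFinset (fun _ : Fin d => Finset.range (S.card + 1)) := by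
      intro e he
      rw [Finset.mem_image] at he
      obtain ⟨y, -, hy⟩ := he
      rw [Fintype.mem_piFinset]
      intro i
      rw [Finset.mem_range, ← hy]
      exact Nat.lt_succ_of_le (le_trans (Finset.card_filter_le _ _) le_rfl)
    calc (Finset.univ.image enc).card
        ≤ (Fintype.piFinset (fun _ : Fin d => Finset.range (S.card + 1))).card :=
          Finset.card_le_card hsub
      _ = (S.card + 1)^d := by
          rw [Fintype.card_piFinset]
          simp
  exact le_trans h1 h2

end Sampling



/-- **Alon–Brightwell–Kierstead–Kostochka–Winkler**: there is an absolute
constant `C` such that every `K`-majority tournament (for `K ≥ 2`) has a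
dominating set of size at most `C · K · log K`. The `2K - 1` linear orders on
the finite vertex set `V` are encoded by injective functions `f i : V → ℕ`,
and `T u v` holds iff `v ≺ᵢ u` for at least `K` of them. -/
theorem K_majority_tournament_dominating_set :
    ∃ C : ℝ, 0 < C ∧
      ∀ (K : ℕ), 2 ≤ K → ∀ (V : Type) [Fintype V], ∀ (T : V → V → Prop)
        (f : Fin (2 * K - 1) → V → ℕ), (∀ i, Function.Injective (f i)) →
        (∀ u v : V, T u v ↔
          K ≤ (Finset.univ.filter fun i => f i v < f i u).card) →
        ∃ X : Finset V, (X.card : ℝ) ≤ C * K * Real.log K ∧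
          ∀ y ∉ X, ∃ x ∈ X, T x y := by
  classical
  refine ⟨12292, by norm_num, ?_⟩
  intro K hK V _ T f hinj hTdef
  have hKR : (2:ℝ) ≤ (K:ℝ) := by exact_mod_cast hK
  have hlogK : Real.log 2 ≤ Real.log K := Real.log_le_log (by norm_num) hKR
  have hlog2 : (0.6931471803 : ℝ) < Real.log 2 := Real.log_two_gt_d9
  have hlogKpos : 0 < Real.log K := lt_of_lt_of_le (by linarith) hlogK
  rcases isEmpty_or_nonempty V with hV | hV
  · refine ⟨∅, ?_, ?_⟩
    · simp only [Finset.card_empty, Nat.cast_zero]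
      positivity
    · intro y _
      exact (hV.false y).elim
  -- totality of the tournament
  have htot : ∀ u v : V, u ≠ v → T u v ∨ T v u := by
    intro u v huv
    have hcard : (Finset.univ.filter fun i => f i v < f i u).card +
        (Finset.univ.filter fun i => f i u < f i v).card = 2 * K - 1 := by
      have hne : ∀ i, f i u ≠ f i v := fun i h => huv (hinj i h)
      have hcompl : (Finset.univ.filter fun i => f i u < f i v) =
          (Finset.univ.filter fun i => ¬ f i v < f i u) := by
        apply Finset.filter_congr
        intro i _
        have := hne i
        constructor
        · intro h; omega
        · intro h; omega
      rw [hcompl, Finset.card_filter_add_card_filter_not]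
      simp
    by_contra hcon
    push_neg at hcon
    rw [hTdef] at hcon
    rw [hTdef] at hcon
    omega
  -- payoff matrix and the optimal mixed strategy
  set A : V → V → ℝ := fun u v => (if T u v then 1 else 0) - (if T v u then 1 else 0)
    with hA
  obtain ⟨p, hp0, hp1, hpay⟩ := skew_game_value V A (by
    intro u v
    rw [hA]
    dsimp only
    ring)
  -- the dominator sets
  set B : V → Finset V := fun y => Finset.univ.filter
    (fun x => K ≤ (Finset.univ.filter fun i => f i y < f i x).card) with hB
  have hBmem : ∀ x y, x ∈ B y ↔ T x y := by
    intro x y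
    rw [hB]
    simp only [Finset.mem_filter, Finset.mem_univ, true_and]
    exact (hTdef x y).symm
  have hsum_ind : ∀ y, ∑ x, p x * (if T x y then (1:ℝ) else 0) = ∑ x ∈ B y, p x := by
    intro y
    simp only [mul_ite, mul_one, mul_zero]
    rw [← Finset.sum_filter]
    congr 1
    rw [hB]
    apply Finset.filter_congr
    intro x _
    exact hTdef x y
  -- every vertex is strongly dominated in measure
  have hdom : ∀ y, 1 - p y ≤ 2 * ∑ x ∈ B y, p x := by
    intro y
    have hpayy := hpay y
    have hAsplit : ∑ x, p x * A x y =
        (∑ x, p x * (if T x y then (1:ℝ) else 0)) -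
          (∑ x, p x * (if T y x then (1:ℝ) else 0)) := by
      rw [← Finset.sum_sub_distrib]
      apply Finset.sum_congr rfl
      intro x _
      rw [hA]
      dsimp only
      ring
    have hge : ∑ x, p x * (if T y x then (1:ℝ) else 0) ≤
        ∑ x, p x * (if T x y then (1:ℝ) else 0) := by
      rw [hAsplit] at hpayy
      linarith
    have h1py : 1 - p y = ∑ x ∈ Finset.univ.erase y, p x := by
      have := Finset.sum_erase_add Finset.univ p (Finset.mem_univ y)
      rw [hp1] at this
      linarith
    have hlow : 1 - p y ≤ (∑ x, p x * (if T x y then (1:ℝ) else 0)) +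
        (∑ x, p x * (if T y x then (1:ℝ) else 0)) := by
      rw [h1py, ← Finset.sum_add_distrib]
      calc ∑ x ∈ Finset.univ.erase y, p x
          ≤ ∑ x ∈ Finset.univ.erase y,
              (p x * (if T x y then (1:ℝ) else 0) + p x * (if T y x then (1:ℝ) else 0)) := by
            apply Finset.sum_le_sum
            intro x hx
            have hxy : x ≠ y := (Finset.mem_erase.mp hx).1
            rcases htot x y hxy with h | h
            · rw [if_pos h]
              have : (0:ℝ) ≤ p x * (if T y x then (1:ℝ) else 0) := by
                apply mul_nonneg (hp0 x)
                split <;> norm_num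
              linarith [hp0 x]
            · rw [if_pos h]
              have : (0:ℝ) ≤ p x * (if T x y then (1:ℝ) else 0) := by
                apply mul_nonneg (hp0 x)
                split <;> norm_num
              linarith [hp0 x]
        _ ≤ ∑ x, (p x * (if T x y then (1:ℝ) else 0) +
              p x * (if T y x then (1:ℝ) else 0)) := by
            apply Finset.sum_le_sum_of_subset_of_nonneg (Finset.erase_subset _ _)
            intro x _ _
            have h1 : (0:ℝ) ≤ p x * (if T x y then (1:ℝ) else 0) := by
              apply mul_nonneg (hp0 x); split <;> norm_num
            have h2 : (0:ℝ) ≤ p x * (if T y x then (1:ℝ) else 0) := by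
              apply mul_nonneg (hp0 x); split <;> norm_num
            linarith
    rw [hsum_ind y] at hge hlow
    linarith
  -- heavy vertices
  set H : Finset V := Finset.univ.filter (fun y => (1:ℝ)/4 ≤ p y) with hH
  have hHcard : H.card ≤ 4 := by
    have h1 : (H.card : ℝ) * (1/4) ≤ ∑ y ∈ H, p y := by
      have := Finset.card_nsmul_le_sum H p (1/4) (fun y hy => by
        rw [hH, Finset.mem_filter] at hy
        exact hy.2)
      rw [nsmul_eq_mul] at this
      exact this
    have h2 : ∑ y ∈ H, p y ≤ 1 := by
      rw [← hp1]
      exact Finset.sum_le_sum_of_subset_of_nonneg (Finset.subset_univ H)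
        (fun v _ _ => hp0 v)
    have : (H.card : ℝ) ≤ 4 := by linarith
    exact_mod_cast this
  -- parameters
  set L : ℕ := Nat.log 2 K + 1 with hL
  set m : ℕ := 4096 * K * L with hm
  have hL1 : 1 ≤ L := by omega
  have hKL : K < 2^L := Nat.lt_pow_succ_log_self (by norm_num) K
  have hLL : L ≤ 2^L := Nat.le_of_lt (Nat.lt_two_pow_self (n := L))
  have hm32 : 32 ≤ m := by
    have h1 : 4096 * 2 * 1 ≤ 4096 * K * L :=
      Nat.mul_le_mul (Nat.mul_le_mul_left 4096 hK) hL1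
    omega
  have hm8 : m / 8 = 512 * K * L := by
    have h : m = 8 * (512 * K * L) := by rw [hm]; ring
    rw [h, Nat.mul_div_cancel_left _ (by norm_num)]
  have hmsub : m - m / 8 = 3584 * K * L := by
    rw [hm8, hm]
    have h1 : 4096 * K * L = 3584 * K * L + 512 * K * L := by ring
    omega
  have hbig : 2 * ((2*m+1)^(2*K-1) * 2^(m - m/8)) < 2^m := by
    have h2m1 : 2*m+1 ≤ 2^(14 + 2*L) := by
      have hstep : 2*m+1 = 8192 * K * L + 1 := by rw [hm]; ring
      have hb : 8192 * K * L ≤ 8192 * 2^L * 2^L :=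
        Nat.mul_le_mul (Nat.mul_le_mul_left 8192 (le_of_lt hKL)) hLL
      have hbb : (8192:ℕ) * 2^L * 2^L = 2^(13 + 2*L) := by
        have : (8192:ℕ) = 2^13 := by norm_num
        rw [this, ← pow_add, ← pow_add]
        congr 1
        ring
      have hone : (1:ℕ) ≤ 2^(13 + 2*L) := Nat.one_le_two_pow
      have hfin : (2:ℕ)^(13 + 2*L) + 2^(13+2*L) = 2^(14+2*L) := by
        rw [← two_mul, ← pow_succ']
        congr 1
        ring
      omega
    have hpow : (2*m+1)^(2*K-1) ≤ 2^((14+2*L)*(2*K-1)) := by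
      rw [pow_mul]
      exact Nat.pow_le_pow_left h2m1 (2*K-1)
    have hexp : 1 + ((14+2*L)*(2*K-1) + (m - m/8)) < m := by
      rw [hmsub, hm]
      have h1 : (14+2*L)*(2*K-1) ≤ (14+2*L)*(2*K) := Nat.mul_le_mul_left _ (by omega)
      have h2 : (14+2*L)*(2*K) = 28*K + 4*K*L := by ring
      have h3 : 28*K ≤ 28*K*L := by
        calc 28*K = 28*K*1 := by ring
          _ ≤ 28*K*L := Nat.mul_le_mul_left _ hL1
      have h4 : 2 ≤ K * L := by
        calc 2 = 2*1 := by ring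
          _ ≤ K * L := Nat.mul_le_mul hK hL1
      nlinarith
    calc 2 * ((2*m+1)^(2*K-1) * 2^(m - m/8))
        ≤ 2 * (2^((14+2*L)*(2*K-1)) * 2^(m - m/8)) := by
          apply Nat.mul_le_mul_left
          exact Nat.mul_le_mul_right _ hpow
      _ = 2^(1 + ((14+2*L)*(2*K-1) + (m - m/8))) := by
          rw [pow_add, pow_add]
          ring
      _ < 2^m := Nat.pow_lt_pow_right (by norm_num) hexp
  -- apply the net theorem
  obtain ⟨s, hs⟩ := exists_net p hp0 hp1 B (2*K-1)
    (fun S => by rw [hB]; exact trace_count (2*K-1) K f hinj S) hm32 hbig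
  -- the dominating set
  refine ⟨H ∪ Finset.image s Finset.univ, ?_, ?_⟩
  · -- size bound
    have hcard : (H ∪ Finset.image s Finset.univ).card ≤ 4 + m := by
      calc (H ∪ Finset.image s Finset.univ).card
          ≤ H.card + (Finset.image s Finset.univ).card := Finset.card_union_le _ _
        _ ≤ 4 + m := by
            apply add_le_add hHcard
            calc (Finset.image s Finset.univ).card ≤ (Finset.univ : Finset (Fin m)).card :=
                  Finset.card_image_le
              _ = m := by simp
    have hcardR : ((H ∪ Finset.image s Finset.univ).card : ℝ) ≤ 4 + m := by
      exact_mod_cast hcard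
    have hLreal : (L:ℝ) ≤ 3 * Real.log K := by
      have hlg : ((Nat.log 2 K : ℕ):ℝ) * Real.log 2 ≤ Real.log K := by
        have hpow : (2:ℕ)^(Nat.log 2 K) ≤ K := Nat.pow_log_le_self 2 (by omega)
        have hpowR : (2:ℝ)^(Nat.log 2 K) ≤ (K:ℝ) := by exact_mod_cast hpow
        have := Real.log_le_log (by positivity) hpowR
        rwa [Real.log_pow] at this
      have hLlog : (L:ℝ) * Real.log 2 ≤ 2 * Real.log K := by
        rw [hL]
        push_cast
        have : Real.log 2 ≤ Real.log K := hlogK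
        nlinarith
      have h32 : 2 * Real.log K ≤ (3 * Real.log K) * Real.log 2 := by
        nlinarith
      have hcancel : (L:ℝ) * Real.log 2 ≤ (3 * Real.log K) * Real.log 2 := by linarith
      have hl2pos : (0:ℝ) < Real.log 2 := by linarith
      exact le_of_mul_le_mul_right hcancel hl2pos
    have hmR : (m:ℝ) ≤ 12288 * K * Real.log K := by
      have hLreal' : ((Nat.log 2 K : ℕ) : ℝ) + 1 ≤ 3 * Real.log K := by
        have h := hLreal
        rw [hL] at h
        push_cast at h
        linarith
      have hKpos : (0:ℝ) ≤ 4096 * K := by positivity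
      have hmul := mul_le_mul_of_nonneg_left hLreal' hKpos
      have hmcast : (m:ℝ) = 4096 * (K:ℝ) * (((Nat.log 2 K : ℕ) : ℝ) + 1) := by
        rw [hm, hL]
        push_cast
        ring
      rw [hmcast]
      nlinarith [hmul]
    have h4R : (4:ℝ) ≤ 4 * K * Real.log K := by
      have hKlog : 2 * Real.log 2 ≤ (K:ℝ) * Real.log K :=
        mul_le_mul hKR hlogK (by linarith) (by linarith)
      nlinarith [hKlog]
    calc ((H ∪ Finset.image s Finset.univ).card : ℝ) ≤ 4 + m := hcardR
      _ ≤ 4 * K * Real.log K + 12288 * K * Real.log K := by linarith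
      _ = 12292 * K * Real.log K := by ring
  · -- domination
    intro y hy
    have hyH : y ∉ H := fun h => hy (Finset.mem_union_left _ h)
    have hpy : p y < 1/4 := by
      by_contra h
      push_neg at h
      exact hyH (by rw [hH]; exact Finset.mem_filter.mpr ⟨Finset.mem_univ y, h⟩)
    have hheavy : 3/8 ≤ ∑ x ∈ B y, p x := by
      have := hdom y
      linarith
    obtain ⟨j, hj⟩ := hs y hheavy
    exact ⟨s j, Finset.mem_union_right _ (Finset.mem_image_of_mem s (Finset.mem_univ j)),
      (hBmem _ _).mp hj⟩
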